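/- Let S be a countably compact sequential topological semigroup that contains a dense inverse subsemigroup. Then S is a topological inverse semigroup. -/

import Mathlib

open Topology Filter

/-- A space is countably compact if every infinite subset has an accumulation point. -/
def CountablyCompactSp (S : Type*) [TopologicalSpace S] : Prop :=
  ∀ A : Set S, A.Infinite → ∃ x : S, x ∈ closure (A \ {x})

private lemma exists_subseq_tendsto_of_cc {S : Type*} [TopologicalSpace S] [T2Space S]
    [SequentialSpace S] (hcc : CountablyCompactSp S) (u : ℕ → S) :
    ∃ z : S, ∃ φ : ℕ → ℕ, StrictMono φ ∧ Tendsto (u ∘ φ) atTop (𝓝 z) := by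
  by_cases hconst : ∃ a : S, {n | u n = a}.Infinite
  · obtain ⟨a, ha⟩ := hconst
    refine ⟨a, Nat.nth (fun n => u n = a), Nat.nth_strictMono ha, ?_⟩
    have hfe : (u ∘ Nat.nth (fun n => u n = a)) = fun _ => a :=
      funext fun n => Nat.nth_mem_of_infinite ha n
    rw [hfe]
    exact tendsto_const_nhds
  · push_neg at hconst
    have hfib : ∀ a : S, {n | u n = a}.Finite := fun a => hconst a
    have hrange : (Set.range u).Infinite := by
      intro hfin
      have hcov : (Set.univ : Set ℕ) ⊆ ⋃ a ∈ Set.range u, {n | u n = a} :=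
        fun n _ => Set.mem_biUnion (Set.mem_range_self n) rfl
      exact Set.infinite_univ ((hfin.biUnion fun a _ => hfib a).subset hcov)
    obtain ⟨x, hx⟩ := hcc (Set.range u) hrange
    have hnotclosed : ¬ IsClosed (Set.range u \ {x}) := by
      intro h
      exact (h.closure_subset hx).2 rfl
    have hnotseq : ¬ IsSeqClosed (Set.range u \ {x}) := fun h => hnotclosed h.isClosed
    simp only [IsSeqClosed, not_forall, Classical.not_imp] at hnotseq
    obtain ⟨v, p, hv, hvp, hpn⟩ := hnotseq
    have hvfib : ∀ a : S, {n | v n = a}.Finite := by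
      intro a
      by_contra hinf
      have hinf' : {n | v n = a}.Infinite := hinf
      have hsub : Tendsto (v ∘ Nat.nth (fun n => v n = a)) atTop (𝓝 p) :=
        hvp.comp (Nat.nth_strictMono hinf').tendsto_atTop
      have hce : (v ∘ Nat.nth (fun n => v n = a)) = fun _ => a :=
        funext fun n => Nat.nth_mem_of_infinite hinf' n
      rw [hce] at hsub
      have hap : a = p := tendsto_nhds_unique tendsto_const_nhds hsub
      have hmem : v (Nat.nth (fun n => v n = a) 0) ∈ Set.range u \ {x} :=
        hv _
      rw [Nat.nth_mem_of_infinite hinf' 0, hap] at hmem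
      exact hpn hmem
    have hkex : ∀ n, ∃ m, u m = v n := fun n => (hv n).1
    choose k hk using hkex
    have hkfin : ∀ N : ℕ, {m | k m ≤ N}.Finite := by
      intro N
      have hsub : {m | k m ≤ N} ⊆ ⋃ j ∈ Set.Iic N, {m | v m = u j} := by
        intro m hm
        exact Set.mem_biUnion hm (hk m).symm
      exact ((Set.finite_Iic N).biUnion fun j _ => hvfib (u j)).subset hsub
    have hstep : ∀ n : ℕ, ∃ m, n < m ∧ k n < k m := by
      intro n
      have hfin2 : ({m | k m ≤ k n} ∪ Set.Iic n).Finite :=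
        (hkfin (k n)).union (Set.finite_Iic n)
      obtain ⟨m, hm⟩ := hfin2.infinite_compl.nonempty
      simp only [Set.mem_compl_iff, Set.mem_union, Set.mem_Iic, Set.mem_setOf_eq, not_or,
        not_le] at hm
      exact ⟨m, hm.2, hm.1⟩
    choose nxt hlt hklt using hstep
    have hgsucc : ∀ j : ℕ, nxt^[j + 1] 0 = nxt (nxt^[j] 0) :=
      fun j => Function.iterate_succ_apply' nxt j 0
    have hgmono : StrictMono (fun j => nxt^[j] 0) :=
      strictMono_nat_of_lt_succ fun j => by rw [hgsucc]; exact hlt _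
    have hφmono : StrictMono (fun j => k (nxt^[j] 0)) :=
      strictMono_nat_of_lt_succ fun j => by rw [hgsucc]; exact hklt _
    refine ⟨p, fun j => k (nxt^[j] 0), hφmono, ?_⟩
    have hcomp : (u ∘ fun j => k (nxt^[j] 0)) = fun j => v (nxt^[j] 0) :=
      funext fun j => hk (nxt^[j] 0)
    rw [hcomp]
    exact hvp.comp hgmono.tendsto_atTop

section Idem

variable {S : Type*} [Semigroup S] (X : Subsemigroup S)

private lemma idem_mul_idem
    (hX : ∀ x ∈ X, ∃! y : S, y ∈ X ∧ x * y * x = x ∧ y * x * y = y) {e f : S} (he : e ∈ X) (hf : f ∈ X) (hee : e * e = e)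
    (hff : f * f = f) : (e * f) * (e * f) = e * f := by
  have hee' : ∀ t : S, e * (e * t) = e * t := fun t => by rw [← mul_assoc, hee]
  have hff' : ∀ t : S, f * (f * t) = f * t := fun t => by rw [← mul_assoc, hff]
  obtain ⟨g, ⟨hgX, hg1, hg2⟩, _⟩ := hX (e * f) (X.mul_mem he hf)
  have hg1' : e * (f * (g * (e * f))) = e * f := by simpa [mul_assoc] using hg1
  have hg2' : ∀ t : S, g * (e * (f * (g * t))) = g * t := by
    intro t
    have h := congrArg (· * t) hg2
    simpa [mul_assoc] using h
  have hqq : (f * (g * e)) * (f * (g * e)) = f * (g * e) := by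
    have h : f * (g * (e * (f * (g * e)))) = f * (g * e) := by rw [hg2' e]
    simpa [mul_assoc] using h
  have hqX : f * (g * e) ∈ X := X.mul_mem hf (X.mul_mem hgX he)
  have h1 : (f * (g * e)) * (e * f) * (f * (g * e)) = f * (g * e) := by
    have h : f * (g * (e * (e * (f * (f * (g * e)))))) = f * (g * e) := by
      rw [hee', hff', hg2' e]
    simpa [mul_assoc] using h
  have h2 : (e * f) * (f * (g * e)) * (e * f) = e * f := by
    have h : e * (f * (f * (g * (e * (e * f))))) = e * f := by
      rw [hff', hee', hg1']
    simpa [mul_assoc] using h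
  have hqself : (f * (g * e)) * (f * (g * e)) * (f * (g * e)) = f * (g * e) := by
    rw [hqq, hqq]
  obtain ⟨w, _, hwu⟩ := hX (f * (g * e)) hqX
  have hef_eq : e * f = f * (g * e) :=
    (hwu (e * f) ⟨X.mul_mem he hf, h1, h2⟩).trans (hwu (f * (g * e)) ⟨hqX, hqself, hqself⟩).symm
  rw [hef_eq]
  exact hqq

private lemma idem_mul_comm
    (hX : ∀ x ∈ X, ∃! y : S, y ∈ X ∧ x * y * x = x ∧ y * x * y = y) {e f : S} (he : e ∈ X) (hf : f ∈ X) (hee : e * e = e)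
    (hff : f * f = f) : e * f = f * e := by
  have hee' : ∀ t : S, e * (e * t) = e * t := fun t => by rw [← mul_assoc, hee]
  have hff' : ∀ t : S, f * (f * t) = f * t := fun t => by rw [← mul_assoc, hff]
  have hef : (e * f) * (e * f) = e * f := idem_mul_idem X hX he hf hee hff
  have hfe : (f * e) * (f * e) = f * e := idem_mul_idem X hX hf he hff hee
  have hef' : e * (f * (e * f)) = e * f := by simpa [mul_assoc] using hef
  have hfe' : f * (e * (f * e)) = f * e := by simpa [mul_assoc] using hfe
  have hc1 : (e * f) * (f * e) * (e * f) = e * f := by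
    have h : e * (f * (f * (e * (e * f)))) = e * f := by rw [hff', hee', hef']
    simpa [mul_assoc] using h
  have hc2 : (f * e) * (e * f) * (f * e) = f * e := by
    have h : f * (e * (e * (f * (f * e)))) = f * e := by rw [hee', hff', hfe']
    simpa [mul_assoc] using h
  have hself : (e * f) * (e * f) * (e * f) = e * f := by rw [hef, hef]
  obtain ⟨w, _, hwu⟩ := hX (e * f) (X.mul_mem he hf)
  exact (hwu (e * f) ⟨X.mul_mem he hf, hself, hself⟩).trans
    (hwu (f * e) ⟨X.mul_mem hf he, hc1, hc2⟩).symm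

end Idem

/-- A countably compact sequential (Hausdorff) topological semigroup containing a dense inverse
subsemigroup is a topological inverse semigroup. -/
theorem countablyCompact_sequential_dense_inverse_subsemigroup {S : Type*} [Semigroup S]
    [TopologicalSpace S] [T2Space S] [SequentialSpace S] [ContinuousMul S]
    (hcc : CountablyCompactSp S)
    (X : Subsemigroup S)
    (hdense : Dense (X : Set S))
    (hX : ∀ x ∈ X, ∃! y : S, y ∈ X ∧ x * y * x = x ∧ y * x * y = y) :
    ∃ i : S → S, Continuous i ∧
      ∀ x : S, (x * i x * x = x ∧ i x * x * i x = i x) ∧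
        ∀ y : S, x * y * x = x → y * x * y = y → y = i x := by
  classical
  set E : Set S := {s : S | s ∈ X ∧ s * s = s} with hEdef
  set C : Set S := closure E with hCdef
  -- C consists of idempotents
  have hCidem : ∀ a ∈ C, a * a = a := by
    have hsub : C ⊆ {s : S | s * s = s} :=
      closure_minimal (fun s hs => hs.2) (isClosed_eq (continuous_id.mul continuous_id)
        continuous_id)
    exact fun a ha => hsub ha
  -- E is multiplicatively closed and commutative
  have hEmulE : ∀ a ∈ E, ∀ b ∈ E, a * b ∈ E := fun a ha b hb =>
    ⟨X.mul_mem ha.1 hb.1, idem_mul_idem X hX ha.1 hb.1 ha.2 hb.2⟩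
  have hEcomm : ∀ a ∈ E, ∀ b ∈ E, a * b = b * a := fun a ha b hb =>
    idem_mul_comm X hX ha.1 hb.1 ha.2 hb.2
  -- C is multiplicatively closed
  have hCmul1 : ∀ a ∈ E, ∀ b ∈ C, a * b ∈ C := by
    intro a ha b hb
    have hsub : C ⊆ (fun t => a * t) ⁻¹' C :=
      closure_minimal (fun t ht => subset_closure (hEmulE a ha t ht))
        (isClosed_closure.preimage (continuous_mul_left a))
    exact hsub hb
  have hCmul : ∀ a ∈ C, ∀ b ∈ C, a * b ∈ C := by
    intro a ha b hb
    have hsub : C ⊆ (fun t => t * b) ⁻¹' C :=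
      closure_minimal (fun t ht => hCmul1 t ht b hb)
        (isClosed_closure.preimage (continuous_mul_right b))
    exact hsub ha
  -- C is commutative
  have hCcomm1 : ∀ a ∈ E, ∀ b ∈ C, a * b = b * a := by
    intro a ha b hb
    have hsub : C ⊆ {t : S | a * t = t * a} :=
      closure_minimal (fun t ht => hEcomm a ha t ht)
        (isClosed_eq (continuous_mul_left a) (continuous_mul_right a))
    exact hsub hb
  have hCcomm : ∀ a ∈ C, ∀ b ∈ C, a * b = b * a := by
    intro a ha b hb
    have hsub : C ⊆ {t : S | t * b = b * t} :=
      closure_minimal (fun t ht => hCcomm1 t ht b hb)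
        (isClosed_eq (continuous_mul_right b) (continuous_mul_left b))
    exact hsub ha
  -- every element of S is regular, with witnesses whose products with it lie in C
  have hD : ∀ x : S, ∃ y : S, (x * y * x = x ∧ y * x * y = y) ∧ (x * y ∈ C ∧ y * x ∈ C) := by
    set D : Set S := {x : S | ∃ y : S, (x * y * x = x ∧ y * x * y = y) ∧
      (x * y ∈ C ∧ y * x ∈ C)} with hDdef
    have hXD : (X : Set S) ⊆ D := by
      intro x hx
      obtain ⟨y, ⟨hyX, h1, h2⟩, _⟩ := hX x hx
      refine ⟨y, ⟨h1, h2⟩, subset_closure ⟨X.mul_mem hx hyX, ?_⟩,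
        subset_closure ⟨X.mul_mem hyX hx, ?_⟩⟩
      · rw [← mul_assoc, h1]
      · rw [← mul_assoc, h2]
    have hDseq : IsSeqClosed D := by
      intro u p hu hup
      choose Y hY using hu
      obtain ⟨z, φ, hφ, hφt⟩ := exists_subseq_tendsto_of_cc hcc Y
      have huφ : Tendsto (fun n => u (φ n)) atTop (𝓝 p) := hup.comp hφ.tendsto_atTop
      have hYφ : Tendsto (fun n => Y (φ n)) atTop (𝓝 z) := hφt
      have h1 : p * z * p = p := by
        have ht : Tendsto (fun n => u (φ n) * Y (φ n) * u (φ n)) atTop (𝓝 (p * z * p)) :=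
          (huφ.mul hYφ).mul huφ
        exact tendsto_nhds_unique (ht.congr fun n => (hY (φ n)).1.1) huφ
      have h2 : z * p * z = z := by
        have ht : Tendsto (fun n => Y (φ n) * u (φ n) * Y (φ n)) atTop (𝓝 (z * p * z)) :=
          (hYφ.mul huφ).mul hYφ
        exact tendsto_nhds_unique (ht.congr fun n => (hY (φ n)).1.2) hYφ
      have h3 : p * z ∈ C :=
        isClosed_closure.mem_of_tendsto (huφ.mul hYφ)
          (Eventually.of_forall fun n => (hY (φ n)).2.1)
      have h4 : z * p ∈ C :=
        isClosed_closure.mem_of_tendsto (hYφ.mul huφ)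
          (Eventually.of_forall fun n => (hY (φ n)).2.2)
      exact ⟨z, ⟨h1, h2⟩, h3, h4⟩
    have hDall : ∀ x : S, x ∈ D := by
      intro x
      have h : closure (X : Set S) ⊆ D := closure_minimal hXD hDseq.isClosed
      rw [hdense.closure_eq] at h
      exact h (Set.mem_univ x)
    exact hDall
  -- every idempotent of S lies in C
  have hidemC : ∀ e : S, e * e = e → e ∈ C := by
    intro e hee
    obtain ⟨y, ⟨h1, h2⟩, hey, hye⟩ := hD e
    have hyeq : (y * e) * (e * y) = y := by
      calc (y * e) * (e * y) = (y * (e * e)) * y := by simp only [mul_assoc]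
        _ = (y * e) * y := by rw [hee]
        _ = y := h2
    have hyC : y ∈ C := by rw [← hyeq]; exact hCmul _ hye _ hey
    have hyy : y * y = y := hCidem y hyC
    have heeq : (e * y) * (y * e) = e := by
      calc (e * y) * (y * e) = (e * (y * y)) * e := by simp only [mul_assoc]
        _ = (e * y) * e := by rw [hyy]
        _ = e := h1
    have hey' : e = y := by
      calc e = (e * y) * (y * e) := heeq.symm
        _ = (y * e) * (e * y) := hCcomm _ hey _ hye
        _ = y := hyeq
    rw [hey']
    exact hyC
  -- idempotents of S commute
  have hcomm : ∀ a b : S, a * a = a → b * b = b → a * b = b * a :=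
    fun a b ha hb => hCcomm a (hidemC a ha) b (hidemC b hb)
  -- uniqueness of inverses in S
  have huniq : ∀ x y z : S, x * y * x = x → y * x * y = y → x * z * x = x → z * x * z = z →
      y = z := by
    intro x y z hy1 hy2 hz1 hz2
    have hxy : (x * y) * (x * y) = x * y := by rw [← mul_assoc, hy1]
    have hxz : (x * z) * (x * z) = x * z := by rw [← mul_assoc, hz1]
    have hyx : (y * x) * (y * x) = y * x := by rw [← mul_assoc, hy2]
    have hzx : (z * x) * (z * x) = z * x := by rw [← mul_assoc, hz2]
    have key1 : z = z * (x * y) := by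
      calc z = z * x * z := hz2.symm
        _ = z * (x * y * x) * z := by rw [hy1]
        _ = z * ((x * y) * (x * z)) := by simp only [mul_assoc]
        _ = z * ((x * z) * (x * y)) := by rw [hcomm (x * y) (x * z) hxy hxz]
        _ = (z * (x * z)) * (x * y) := (mul_assoc _ _ _).symm
        _ = z * (x * y) := by rw [show z * (x * z) = z from by rw [← mul_assoc]; exact hz2]
    have key2 : y = (z * x) * y := by
      calc y = y * x * y := hy2.symm
        _ = y * (x * z * x) * y := by rw [hz1]
        _ = ((y * x) * (z * x)) * y := by simp only [mul_assoc]
        _ = ((z * x) * (y * x)) * y := by rw [hcomm (y * x) (z * x) hyx hzx]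
        _ = (z * x) * ((y * x) * y) := mul_assoc _ _ _
        _ = (z * x) * y := by rw [show (y * x) * y = y from hy2]
    calc y = (z * x) * y := key2
      _ = z * (x * y) := mul_assoc _ _ _
      _ = z := key1.symm
  -- the inversion map
  choose i hi using hD
  refine ⟨i, ?_, fun x => ⟨(hi x).1, fun y hy1 hy2 => huniq x y (i x) hy1 hy2 (hi x).1.1
    (hi x).1.2⟩⟩
  refine continuous_iff_seqContinuous.mpr ?_
  intro u p hup
  apply tendsto_of_subseq_tendsto
  intro ns hns
  obtain ⟨z, ms, hms, hmst⟩ := exists_subseq_tendsto_of_cc hcc (fun n => i (u (ns n)))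
  refine ⟨ms, ?_⟩
  have huns : Tendsto (fun n => u (ns (ms n))) atTop (𝓝 p) :=
    hup.comp (hns.comp hms.tendsto_atTop)
  have hz : Tendsto (fun n => i (u (ns (ms n)))) atTop (𝓝 z) := hmst
  have e1 : p * z * p = p := by
    have ht : Tendsto (fun n => u (ns (ms n)) * i (u (ns (ms n))) * u (ns (ms n))) atTop
        (𝓝 (p * z * p)) := (huns.mul hz).mul huns
    exact tendsto_nhds_unique (ht.congr fun n => (hi (u (ns (ms n)))).1.1) huns
  have e2 : z * p * z = z := by
    have ht : Tendsto (fun n => i (u (ns (ms n))) * u (ns (ms n)) * i (u (ns (ms n)))) atTop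
        (𝓝 (z * p * z)) := (hz.mul huns).mul hz
    exact tendsto_nhds_unique (ht.congr fun n => (hi (u (ns (ms n)))).1.2) hz
  have hz_eq : z = i p := huniq p z (i p) e1 e2 (hi p).1.1 (hi p).1.2
  rw [← hz_eq]
  exact hz
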